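/- For any reduced indecomposable root system Φ, any r, s ∈ Φ⁺ and any Δ ⊆ Π(Φ), the numbers K^Δ satisfy K_{r,s}^Δ = (−1)^{ht(r)−ht(s)} · ((r,r)/(s,s)) · K_{−s,−r}^Δ. -/

import Mathlib

open RealInnerProductSpace Classical

/-- The number K_{r,s}^Δ: the sum over all s-decompositions (q₁,…,q_t) of r
with respect to Δ of the products N_{s,q₁}N_{s+q₁,q₂}⋯N_{s+q₁+⋯+q_{t−1},q_t};
K_{s,s}^Δ = 1, and K_{r,s}^Δ = 0 if no decomposition exists. -/
noncomputable def Kc {V : Type*} [AddCommGroup V] (Φ Δ : Set V)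
    (N : V → V → ℝ) (r s : V) : ℝ :=
  if r = s then 1 else
  ∑ᶠ L ∈ {L : List V | (∀ q ∈ L, q ∈ Δ) ∧
      (∀ i, 0 < i → i ≤ L.length → s + (L.take i).sum ∈ Φ) ∧
      s + L.sum = r},
    ((List.range L.length).map
      (fun i => N (s + (L.take i).sum) (L.getD i 0))).prod

section Aux

variable {V : Type*}

/-- The product of structure constants along a decomposition `L` starting at `a`. -/
noncomputable def Fprod [AddCommGroup V] (N : V → V → ℝ) (a : V) (L : List V) : ℝ :=
  ((List.range L.length).map
    (fun i => N (a + (L.take i).sum) (L.getD i 0))).prod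

lemma Fprod_nil [AddCommGroup V] (N : V → V → ℝ) (a : V) : Fprod N a [] = 1 := by
  simp [Fprod]

lemma Fprod_cons [AddCommGroup V] (N : V → V → ℝ) (a q : V) (L : List V) :
    Fprod N a (q :: L) = N a q * Fprod N (a + q) L := by
  unfold Fprod
  rw [List.length_cons, List.range_succ_eq_map, List.map_cons, List.prod_cons]
  congr 1
  · simp
  · rw [List.map_map]
    congr 1
    refine List.map_congr_left (fun i _ => ?_)
    simp [List.take_succ_cons, add_assoc]

lemma Fprod_snoc [AddCommGroup V] (N : V → V → ℝ) (a q : V) (L : List V) :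
    Fprod N a (L ++ [q]) = Fprod N a L * N (a + L.sum) q := by
  induction L generalizing a with
  | nil => simp [Fprod_nil, Fprod_cons]
  | cons x L ih =>
      rw [List.cons_append, Fprod_cons, ih, Fprod_cons]
      rw [List.sum_cons]
      ring_nf
      rw [add_assoc]

variable [NormedAddCommGroup V] [InnerProductSpace ℝ V]

/-- The single-step sign/length relation coming from the cyclic identity and
antisymmetry. -/
lemma Nstep (Φ : Set V) (N : V → V → ℝ)
    (h0 : (0 : V) ∉ Φ) (hΦneg : ∀ r ∈ Φ, -r ∈ Φ)
    (hanti : ∀ r s, r ∈ Φ → s ∈ Φ → r + s ∈ Φ → N s r = -N r s)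
    (hcyc : ∀ r₁ r₂ r₃, r₁ ∈ Φ → r₂ ∈ Φ → r₃ ∈ Φ → r₁ + r₂ + r₃ = 0 →
      N r₁ r₂ / ⟪r₃, r₃⟫ = N r₂ r₃ / ⟪r₁, r₁⟫ ∧
      N r₂ r₃ / ⟪r₁, r₁⟫ = N r₃ r₁ / ⟪r₂, r₂⟫)
    (a q : V) (ha : a ∈ Φ) (hq : q ∈ Φ) (haq : a + q ∈ Φ) :
    N a q = -(⟪a + q, a + q⟫ / ⟪a, a⟫) * N (-(a + q)) q := by
  have ha0 : a ≠ 0 := fun h => h0 (h ▸ ha)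
  have haq0 : (a + q : V) ≠ 0 := fun h => h0 (h ▸ haq)
  have hia : ⟪a, a⟫ ≠ 0 := fun h => ha0 (inner_self_eq_zero.mp h)
  have hiaq : ⟪a + q, a + q⟫ ≠ 0 := fun h => haq0 (inner_self_eq_zero.mp h)
  have hcy := (hcyc a q (-(a + q)) ha hq (hΦneg _ haq) (by abel)).1
  rw [inner_neg_neg] at hcy
  have hant : N q (-(a + q)) = -N (-(a + q)) q := by
    have hmem : -(a + q) + q ∈ Φ := by
      have : -(a + q) + q = -a := by abel
      rw [this]; exact hΦneg _ ha
    exact hanti (-(a + q)) q (hΦneg _ haq) hq hmem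
  rw [hant] at hcy
  field_simp at hcy ⊢
  linarith

/-- The key telescoping identity for the products along a decomposition and
its reverse. -/
lemma Fprod_reverse (Φ Δ : Set V) (N : V → V → ℝ)
    (h0 : (0 : V) ∉ Φ) (hΦneg : ∀ r ∈ Φ, -r ∈ Φ) (hΔ : Δ ⊆ Φ)
    (hanti : ∀ r s, r ∈ Φ → s ∈ Φ → r + s ∈ Φ → N s r = -N r s)
    (hcyc : ∀ r₁ r₂ r₃, r₁ ∈ Φ → r₂ ∈ Φ → r₃ ∈ Φ → r₁ + r₂ + r₃ = 0 →
      N r₁ r₂ / ⟪r₃, r₃⟫ = N r₂ r₃ / ⟪r₁, r₁⟫ ∧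
      N r₂ r₃ / ⟪r₁, r₁⟫ = N r₃ r₁ / ⟪r₂, r₂⟫) :
    ∀ (L : List V) (a : V), a ∈ Φ → (∀ q ∈ L, q ∈ Δ) →
      (∀ i, 0 < i → i ≤ L.length → a + (L.take i).sum ∈ Φ) →
      Fprod N a L = (-1 : ℝ) ^ L.length * (⟪a + L.sum, a + L.sum⟫ / ⟪a, a⟫) *
        Fprod N (-(a + L.sum)) L.reverse := by
  intro L
  induction L with
  | nil =>
      intro a ha _ _
      have ha0 : a ≠ 0 := fun h => h0 (h ▸ ha)
      have hia : ⟪a, a⟫ ≠ 0 := fun h => ha0 (inner_self_eq_zero.mp h)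
      simp [Fprod_nil, div_self hia]
      exact (div_self (pow_ne_zero 2 (norm_ne_zero_iff.mpr ha0))).symm
  | cons q L ih =>
      intro a ha hΔL hmem
      have hq : q ∈ Φ := hΔ (hΔL q (List.mem_cons_self))
      have haq : a + q ∈ Φ := by
        have := hmem 1 one_pos (by simp)
        simpa using this
      have hmem' : ∀ i, 0 < i → i ≤ L.length → (a + q) + (L.take i).sum ∈ Φ := by
        intro i hi hile
        have := hmem (i + 1) (Nat.succ_pos i) (by simpa using Nat.succ_le_succ hile)
        simpa [List.take_succ_cons, add_assoc] using this
      have hIH := ih (a + q) haq (fun x hx => hΔL x (List.mem_cons_of_mem q hx)) hmem'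
      have hsum : a + (q :: L).sum = (a + q) + L.sum := by
        rw [List.sum_cons]; abel
      have hrev : (q :: L).reverse = L.reverse ++ [q] := by simp
      have hrevsum : -((a + q) + L.sum) + L.reverse.sum = -(a + q) := by
        rw [List.sum_reverse]; abel
      rw [Fprod_cons, hIH, hsum, hrev, Fprod_snoc, hrevsum]
      rw [Nstep Φ N h0 hΦneg hanti hcyc a q ha hq haq]
      have ha0 : a ≠ 0 := fun h => h0 (h ▸ ha)
      have haq0 : (a + q : V) ≠ 0 := fun h => h0 (h ▸ haq)
      have hia : ⟪a, a⟫ ≠ 0 := fun h => ha0 (inner_self_eq_zero.mp h)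
      have hiaq : ⟪a + q, a + q⟫ ≠ 0 := fun h => haq0 (inner_self_eq_zero.mp h)
      rw [List.length_cons, pow_succ]
      field_simp

lemma mul_finsum_mem_aux {α : Type*} (c : ℝ) (S : Set α) (g : α → ℝ) :
    ∑ᶠ x ∈ S, c * g x = c * ∑ᶠ x ∈ S, g x := by
  rw [finsum_mem_def, finsum_mem_def]
  have : S.indicator (fun x => c * g x) = fun x => c * S.indicator g x := by
    funext x
    by_cases hx : x ∈ S <;> simp [Set.indicator, hx]
  rw [this]
  have := smul_finsum (M := ℝ) c (fun x => S.indicator g x)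
  simpa [smul_eq_mul] using this.symm

end Aux

/-- for a reduced (indecomposable) root system Φ with structure
constants N satisfying the Carter relations, any positive roots r, s and any
set Δ of fundamental roots,
K_{r,s}^Δ = (−1)^{ht r − ht s} · ((r,r)/(s,s)) · K_{−s,−r}^Δ. -/
theorem Kc_neg_symmetry {V : Type*} [NormedAddCommGroup V]
    [InnerProductSpace ℝ V] (Φ Δ : Set V) (N : V → V → ℝ) (ht : V → ℤ)
    (hΦfin : Φ.Finite) (h0 : (0 : V) ∉ Φ)
    (hΦneg : ∀ r ∈ Φ, -r ∈ Φ)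
    (hred : ∀ r ∈ Φ, ∀ t : ℝ, t • r ∈ Φ → t = 1 ∨ t = -1)
    (hΔ : Δ ⊆ Φ)
    (hhtadd : ∀ u v : V, ht (u + v) = ht u + ht v)
    (hhtΔ : ∀ q ∈ Δ, ht q = 1)
    (hzero : ∀ r s, r + s ∉ Φ → N r s = 0)
    (hanti : ∀ r s, r ∈ Φ → s ∈ Φ → r + s ∈ Φ → N s r = -N r s)
    (hcyc : ∀ r₁ r₂ r₃, r₁ ∈ Φ → r₂ ∈ Φ → r₃ ∈ Φ → r₁ + r₂ + r₃ = 0 →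
      N r₁ r₂ / ⟪r₃, r₃⟫ = N r₂ r₃ / ⟪r₁, r₁⟫ ∧
      N r₂ r₃ / ⟪r₁, r₁⟫ = N r₃ r₁ / ⟪r₂, r₂⟫)
    (hfour : ∀ r₁ r₂ r₃ r₄ : V, r₁ ∈ Φ → r₂ ∈ Φ → r₃ ∈ Φ → r₄ ∈ Φ →
      r₁ + r₂ + r₃ + r₄ = 0 → r₁ + r₂ ≠ 0 → r₁ + r₃ ≠ 0 → r₂ + r₃ ≠ 0 →
      N r₁ r₂ * N r₃ r₄ / ⟪r₁ + r₂, r₁ + r₂⟫ +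
      N r₂ r₃ * N r₁ r₄ / ⟪r₂ + r₃, r₂ + r₃⟫ +
      N r₃ r₁ * N r₂ r₄ / ⟪r₃ + r₁, r₃ + r₁⟫ = 0)
    (r s : V) (hr : r ∈ Φ) (hs : s ∈ Φ)
    (hrpos : 0 < ht r) (hspos : 0 < ht s) :
    Kc Φ Δ N r s
      = (-1 : ℝ) ^ (ht r - ht s) * (⟪r, r⟫ / ⟪s, s⟫) * Kc Φ Δ N (-s) (-r) := by
  have hht0 : ht 0 = 0 := by have := hhtadd 0 0; simp at this; omega
  have hhtsum : ∀ L : List V, (∀ q ∈ L, q ∈ Δ) → ht L.sum = L.length := by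
    intro L
    induction L with
    | nil => intro _; simpa using hht0
    | cons q L ih =>
        intro h
        rw [List.sum_cons, hhtadd, hhtΔ q (h q (List.mem_cons_self)),
          ih (fun x hx => h x (List.mem_cons_of_mem q hx))]
        simp; omega
  by_cases hrs : r = s
  · subst hrs
    have hr0 : r ≠ 0 := fun h => h0 (h ▸ hr)
    have hir : ⟪r, r⟫ ≠ 0 := fun h => hr0 (inner_self_eq_zero.mp h)
    simp [Kc, div_self hir]
    exact (div_self (pow_ne_zero 2 (norm_ne_zero_iff.mpr hr0))).symm
  · have hrs' : (-s : V) ≠ -r := fun h => hrs (by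
      have := neg_injective h; exact this.symm)
    rw [Kc, Kc, if_neg hrs, if_neg hrs']
    set S₁ : Set (List V) := {L : List V | (∀ q ∈ L, q ∈ Δ) ∧
      (∀ i, 0 < i → i ≤ L.length → s + (L.take i).sum ∈ Φ) ∧ s + L.sum = r} with hS₁
    set S₂ : Set (List V) := {L : List V | (∀ q ∈ L, q ∈ Δ) ∧
      (∀ i, 0 < i → i ≤ L.length → -r + (L.take i).sum ∈ Φ) ∧ -r + L.sum = -s} with hS₂
    -- reversal sends decompositions to decompositions
    have hrevmem : ∀ (a b : V), a ∈ Φ → ∀ L : List V, (∀ q ∈ L, q ∈ Δ) →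
        (∀ i, 0 < i → i ≤ L.length → a + (L.take i).sum ∈ Φ) → a + L.sum = b →
        (∀ q ∈ L.reverse, q ∈ Δ) ∧
        (∀ i, 0 < i → i ≤ L.reverse.length → -b + (L.reverse.take i).sum ∈ Φ) ∧
        -b + L.reverse.sum = -a := by
      intro a b haΦ L h1 h2 h3
      have hsumrev : L.reverse.sum = L.sum := List.sum_reverse L
      refine ⟨fun q hq => h1 q (List.mem_reverse.mp hq), ?_, ?_⟩
      · intro i hi hile
        rw [List.length_reverse] at hile
        have htake : (L.reverse.take i) = (L.drop (L.length - i)).reverse :=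
          List.take_reverse
        have hsum : (L.reverse.take i).sum = L.sum - (L.take (L.length - i)).sum := by
          have heq := List.take_append_drop (L.length - i) L
          have h' : (L.take (L.length - i)).sum + (L.drop (L.length - i)).sum
              = L.sum := by rw [← List.sum_append, heq]
          rw [htake, List.sum_reverse, eq_sub_iff_add_eq, add_comm]
          exact h'
        rw [hsum]
        have heq : -b + (L.sum - (L.take (L.length - i)).sum)
            = -(a + (L.take (L.length - i)).sum) := by
          rw [← h3]; abel
        rw [heq]
        rcases Nat.eq_zero_or_pos (L.length - i) with hj | hj
        · rw [hj]
          simpa using hΦneg a haΦ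
        · exact hΦneg _ (h2 _ hj (Nat.sub_le _ _))
      · rw [hsumrev, ← h3]; abel
    -- the bijection
    have hbij : Set.BijOn (fun L : List V => L.reverse) S₁ S₂ := by
      refine ⟨?_, fun L _ M _ h => List.reverse_injective h, ?_⟩
      · intro L hL
        obtain ⟨h1, h2, h3⟩ := hL
        obtain ⟨g1, g2, g3⟩ := hrevmem s r hs L h1 h2 h3
        exact ⟨g1, g2, g3⟩
      · intro M hM
        obtain ⟨h1, h2, h3⟩ := hM
        obtain ⟨g1, g2, g3⟩ := hrevmem (-r) (-s) (hΦneg r hr) M h1 h2 h3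
        refine ⟨M.reverse, ⟨g1, ?_, ?_⟩, List.reverse_reverse M⟩
        · intro i hi hile
          have := g2 i hi hile
          simpa using this
        · simpa using g3
    -- identify the summands with Fprod and apply the key identity
    have hcongr : ∀ L ∈ S₁,
        ((List.range L.length).map
          (fun i => N (s + (L.take i).sum) (L.getD i 0))).prod
        = (-1 : ℝ) ^ (ht r - ht s) * (⟪r, r⟫ / ⟪s, s⟫) *
          ((List.range L.reverse.length).map
            (fun i => N (-r + (L.reverse.take i).sum) (L.reverse.getD i 0))).prod := by
      intro L hL
      obtain ⟨h1, h2, h3⟩ := hL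
      have hlen : (ht r - ht s : ℤ) = L.length := by
        rw [← h3, hhtadd, hhtsum L h1]; omega
      have key := Fprod_reverse Φ Δ N h0 hΦneg hΔ hanti hcyc L s hs h1 h2
      rw [h3] at key
      have e1 : ((List.range L.length).map
          (fun i => N (s + (L.take i).sum) (L.getD i 0))).prod = Fprod N s L := rfl
      have e2 : ((List.range L.reverse.length).map
          (fun i => N (-r + (L.reverse.take i).sum) (L.reverse.getD i 0))).prod
          = Fprod N (-r) L.reverse := rfl
      rw [e1, e2, key]
      congr 1
      rw [hlen, zpow_natCast]
    calc ∑ᶠ L ∈ S₁, ((List.range L.length).map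
          (fun i => N (s + (L.take i).sum) (L.getD i 0))).prod
        = ∑ᶠ L ∈ S₂, (-1 : ℝ) ^ (ht r - ht s) * (⟪r, r⟫ / ⟪s, s⟫) *
          ((List.range L.length).map
            (fun i => N (-r + (L.take i).sum) (L.getD i 0))).prod := by
          exact finsum_mem_eq_of_bijOn _ hbij hcongr
      _ = (-1 : ℝ) ^ (ht r - ht s) * (⟪r, r⟫ / ⟪s, s⟫) *
          ∑ᶠ L ∈ S₂, ((List.range L.length).map
            (fun i => N (-r + (L.take i).sum) (L.getD i 0))).prod := by
          exact mul_finsum_mem_aux _ _ _
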